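/- Let K ∈ ℝ, λ ∈ ℝ, D > 0, and set d = 2D. Let v : ℝ → ℝ be three times continuously differentiable on [-D, D] and satisfy the Neumann eigenvalue problem v''(x) - K x v'(x) = -λ v(x) for all x ∈ (-D, D), with v'(-D) = 0 and v'(D) = 0. Assume moreover that v'(x) > 0 for all x ∈ (-D, D). Then λ ≥ 4s(1-s)·π²/d² + sK for every s ∈ (0, 1); in particular λ ≥ sup_{s ∈ (0,1)} { 4s(1-s)π²/d² + sK }. -/

import Mathlib

open Real Set MeasureTheory

set_option maxHeartbeats 1600000 in
theorem witten_neumann_eigenvalue_lower_bound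
    (K lam D d : ℝ) (hD : 0 < D) (hd : d = 2 * D)
    (v : ℝ → ℝ) (hv : ContDiffOn ℝ 3 v (Set.Icc (-D) D))
    (hode : ∀ x ∈ Set.Ioo (-D) D,
      derivWithin (derivWithin v (Set.Icc (-D) D)) (Set.Icc (-D) D) x
        - K * x * derivWithin v (Set.Icc (-D) D) x = -lam * v x)
    (hbc1 : derivWithin v (Set.Icc (-D) D) (-D) = 0)
    (hbc2 : derivWithin v (Set.Icc (-D) D) D = 0)
    (hmono : ∀ x ∈ Set.Ioo (-D) D, 0 < derivWithin v (Set.Icc (-D) D) x) :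
    (∀ s ∈ Set.Ioo (0:ℝ) 1, lam ≥ 4 * s * (1 - s) * π ^ 2 / d ^ 2 + s * K) ∧
    lam ≥ sSup {y : ℝ | ∃ s ∈ Set.Ioo (0:ℝ) 1,
      y = 4 * s * (1 - s) * π ^ 2 / d ^ 2 + s * K} := by
  have hDD : -D < D := by linarith
  have hUD : UniqueDiffOn ℝ (Set.Icc (-D) D) := uniqueDiffOn_Icc hDD
  set I : Set ℝ := Set.Icc (-D) D with hIdef
  set φ : ℝ → ℝ := derivWithin v I with hphidef
  set ψ : ℝ → ℝ := derivWithin φ I with hpsidef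
  have hmD : -D ∈ I := left_mem_Icc.mpr hDD.le
  have hDmem : D ∈ I := right_mem_Icc.mpr hDD.le
  -- smoothness
  have hφC : ContDiffOn ℝ 2 φ I := hv.derivWithin hUD (by norm_num)
  have hψC : ContDiffOn ℝ 1 ψ I := hφC.derivWithin hUD (by norm_num)
  have hvdiff : DifferentiableOn ℝ v I := hv.differentiableOn (by norm_num)
  have hφdiff : DifferentiableOn ℝ φ I := hφC.differentiableOn (by norm_num)
  have hφcont : ContinuousOn φ I := hφC.continuousOn
  have hψcont : ContinuousOn ψ I := hψC.continuousOn
  -- nonnegativity of φ on I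
  have hφ0 : ∀ x ∈ I, 0 ≤ φ x := by
    intro x hx
    rcases eq_or_lt_of_le hx.1 with h1 | h1
    · rw [← h1, hbc1]
    rcases eq_or_lt_of_le hx.2 with h2 | h2
    · rw [h2, hbc2]
    · exact (hmono x ⟨h1, h2⟩).le
  -- interior derivative facts
  have hIoo : ∀ x ∈ Set.Ioo (-D) D, I ∈ nhds x := fun x hx => Icc_mem_nhds hx.1 hx.2
  have hdv : ∀ x ∈ Set.Ioo (-D) D, HasDerivAt v (φ x) x := fun x hx =>
    ((hvdiff x (Ioo_subset_Icc_self hx)).hasDerivWithinAt).hasDerivAt (hIoo x hx)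
  have hdφ : ∀ x ∈ Set.Ioo (-D) D, HasDerivAt φ (ψ x) x := fun x hx =>
    ((hφdiff x (Ioo_subset_Icc_self hx)).hasDerivWithinAt).hasDerivAt (hIoo x hx)
  have hdψ : ∀ x ∈ Set.Ioo (-D) D,
      HasDerivAt ψ (K * φ x + K * x * ψ x - lam * φ x) x := by
    intro x hx
    have h1 : HasDerivAt (fun y => K * y * φ y - lam * v y)
        (K * φ x + K * x * ψ x - lam * φ x) x := by
      have ha := (((hasDerivAt_id x).const_mul K).mul (hdφ x hx)).sub
        ((hdv x hx).const_mul lam)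
      exact ha.congr_deriv (by simp only [id_eq]; ring)
    have heq : ψ =ᶠ[nhds x] fun y => K * y * φ y - lam * v y := by
      filter_upwards [isOpen_Ioo.mem_nhds hx] with y hy
      have := hode y hy
      linarith
    exact (heq.hasDerivAt_iff).mpr h1
  -- endpoint sign of ψ
  have hψmD : 0 ≤ ψ (-D) := by
    have hps : HasDerivWithinAt φ (ψ (-D)) I (-D) :=
      (hφdiff (-D) hmD).hasDerivWithinAt
    rw [hasDerivWithinAt_iff_tendsto_slope] at hps
    rw [show I \ {-D} = Ioc (-D) D from Icc_diff_left,
      nhdsWithin_Ioc_eq_nhdsGT hDD] at hps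
    refine ge_of_tendsto hps ?_
    filter_upwards [Ioc_mem_nhdsGT_of_mem ⟨le_refl (-D), hDD⟩] with z hz
    rw [slope_def_field, hbc1, sub_zero]
    exact div_nonneg (hφ0 z ⟨hz.1.le, hz.2⟩) (by linarith [hz.1])
  have hψD : ψ D ≤ 0 := by
    have hps : HasDerivWithinAt φ (ψ D) I D :=
      (hφdiff D hDmem).hasDerivWithinAt
    rw [hasDerivWithinAt_iff_tendsto_slope] at hps
    rw [show I \ {D} = Ico (-D) D from Icc_sdiff_right,
      nhdsWithin_Ico_eq_nhdsLT hDD] at hps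
    refine le_of_tendsto hps ?_
    filter_upwards [Ico_mem_nhdsLT_of_mem ⟨hDD, le_refl D⟩] with z hz
    rw [slope_def_field, hbc2, sub_zero]
    exact div_nonpos_of_nonneg_of_nonpos (hφ0 z ⟨hz.1, hz.2.le⟩) (by linarith [hz.2])
  -- main pointwise claim
  have main : ∀ s ∈ Set.Ioo (0:ℝ) 1, lam ≥ 4 * s * (1 - s) * π ^ 2 / d ^ 2 + s * K := by
    intro s hs
    obtain ⟨hs0, hs1⟩ := hs
    by_contra hcon
    push_neg at hcon
    set a : ℝ := π / (2 * D) with hadef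
    have hapos : 0 < a := div_pos pi_pos (by linarith)
    have haD : a * D = π / 2 := by
      rw [hadef]
      field_simp
    have hπd : 4 * s * (1 - s) * π ^ 2 / d ^ 2 = 4 * s * (1 - s) * a ^ 2 := by
      rw [hd, hadef, div_pow]
      ring
    set θ : ℝ := 4 * s * (1 - s) with hθdef
    have hθpos : 0 < θ := by nlinarith
    set m : ℝ := (1 - s) * K with hmdef
    set ε : ℝ := θ * a ^ 2 + s * K - lam with hεdef
    have hεpos : 0 < ε := by
      rw [hπd] at hcon
      simp only [hεdef]
      linarith
    set b : ℝ := Real.sqrt (max (a ^ 2 - ε / (2 * θ)) (a ^ 2 / 2)) with hbdef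
    have hmax0 : (0:ℝ) ≤ max (a ^ 2 - ε / (2 * θ)) (a ^ 2 / 2) :=
      le_trans (by positivity) (le_max_right _ _)
    have hb2 : b ^ 2 = max (a ^ 2 - ε / (2 * θ)) (a ^ 2 / 2) := Real.sq_sqrt hmax0
    have hbpos : 0 < b := Real.sqrt_pos.mpr
      (lt_of_lt_of_le (by positivity) (le_max_right _ _))
    have hb2lt : b ^ 2 < a ^ 2 := by
      rw [hb2]
      apply max_lt
      · have : 0 < ε / (2 * θ) := by positivity
        linarith
      · nlinarith
    have hblt : b < a := lt_of_pow_lt_pow_left₀ 2 hapos.le hb2lt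
    have hθab : θ * a ^ 2 - θ * b ^ 2 ≤ ε / 2 := by
      have h1 : a ^ 2 - ε / (2 * θ) ≤ b ^ 2 := hb2 ▸ le_max_left _ _
      have h2 : a ^ 2 - b ^ 2 ≤ ε / (2 * θ) := by linarith
      calc θ * a ^ 2 - θ * b ^ 2 = θ * (a ^ 2 - b ^ 2) := by ring
        _ ≤ θ * (ε / (2 * θ)) := mul_le_mul_of_nonneg_left h2 hθpos.le
        _ = ε / 2 := by field_simp
    have hbD : b * D < π / 2 := by
      rw [← haD]
      exact mul_lt_mul_of_pos_right hblt hD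
    have hcosc : ∀ x ∈ I, 0 < Real.cos (b * x) := by
      intro x hx
      apply Real.cos_pos_of_mem_Ioo
      constructor
      · have : b * (-D) ≤ b * x := mul_le_mul_of_nonneg_left hx.1 hbpos.le
        nlinarith
      · have : b * x ≤ b * D := mul_le_mul_of_nonneg_left hx.2 hbpos.le
        linarith
    -- the comparison functions
    set H : ℝ → ℝ := fun x => -(θ * b) * (Real.sin (b * x) / Real.cos (b * x)) + m * x
      with hHdef
    set E : ℝ → ℝ := fun x =>
      Real.exp (θ * Real.log (Real.cos (b * x)) + ((m - K) / 2) * x ^ 2) with hEdef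
    set Q : ℝ → ℝ := fun x =>
      K - lam - (m - θ * b ^ 2 / (Real.cos (b * x)) ^ 2) - (H x) ^ 2 + K * x * H x
      with hQdef
    set F : ℝ → ℝ := fun x => (ψ x - H x * φ x) * E x with hFdef
    -- derivatives of H and E
    have hsinD : ∀ x : ℝ, HasDerivAt (fun y => Real.sin (b * y)) (Real.cos (b * x) * b) x := by
      intro x
      have : HasDerivAt (fun y : ℝ => b * y) (b * 1) x := (hasDerivAt_id x).const_mul b
      simpa using this.sin
    have hcosD : ∀ x : ℝ, HasDerivAt (fun y => Real.cos (b * y)) (-Real.sin (b * x) * b) x := by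
      intro x
      have : HasDerivAt (fun y : ℝ => b * y) (b * 1) x := (hasDerivAt_id x).const_mul b
      simpa using this.cos
    have hHd : ∀ x ∈ I, HasDerivAt H (m - θ * b ^ 2 / (Real.cos (b * x)) ^ 2) x := by
      intro x hx
      have hC := (hcosc x hx).ne'
      have h3 := (hsinD x).div (hcosD x) hC
      have h4 := (h3.const_mul (-(θ * b))).add ((hasDerivAt_id x).const_mul m)
      have h5 : HasDerivAt H
          (-(θ * b) * ((Real.cos (b * x) * b * Real.cos (b * x) -
            Real.sin (b * x) * (-Real.sin (b * x) * b)) / Real.cos (b * x) ^ 2) + m * 1) x := h4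
      convert h5 using 1
      have hkey : Real.cos (b * x) * b * Real.cos (b * x) -
          Real.sin (b * x) * (-Real.sin (b * x) * b) = b := by
        linear_combination b * Real.sin_sq_add_cos_sq (b * x)
      rw [hkey]
      ring
    have hEd : ∀ x ∈ I, HasDerivAt E (E x * (H x - K * x)) x := by
      intro x hx
      have hC := (hcosc x hx).ne'
      have h1 := ((hcosD x).log hC).const_mul θ
      have h2 := (hasDerivAt_pow 2 x).const_mul ((m - K) / 2)
      have h3 := (h1.add h2).exp
      convert h3 using 1
      simp only [hEdef, hHdef]
      funext y
      simp only [Pi.add_apply]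
      ring
      simp only [hEdef, hHdef, Pi.add_apply]
      ring
    -- positivity of Q on I
    have hQpos : ∀ x ∈ I, 0 < Q x := by
      intro x hx
      have hC := hcosc x hx
      have hCne := hC.ne'
      have hpy := Real.sin_sq_add_cos_sq (b * x)
      have hQid : Q x = θ * b ^ 2 +
          s * (1 - s) * (2 * (2 * s - 1) * b * (Real.sin (b * x) / Real.cos (b * x)) - K * x) ^ 2
          + s * K - lam := by
        simp only [hQdef, hHdef, hθdef, hmdef]
        field_simp
        linear_combination (-(4 * s * (1 - s) * b ^ 2)) *
          Real.sin_sq_add_cos_sq (b * x)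
      rw [hQid]
      have hsq : 0 ≤ s * (1 - s) *
          (2 * (2 * s - 1) * b * (Real.sin (b * x) / Real.cos (b * x)) - K * x) ^ 2 := by
        have : (0:ℝ) ≤ s * (1 - s) := by nlinarith
        positivity
      linarith [hsq, hθab, hεpos, hεdef]
    -- F is strictly monotone on I
    have hHcont : ContinuousOn H I := by
      apply ContinuousOn.add
      · exact continuousOn_const.mul
          (((Real.continuous_sin.comp (continuous_const.mul continuous_id)).continuousOn).div
            ((Real.continuous_cos.comp (continuous_const.mul continuous_id)).continuousOn)
            (fun x hx => (hcosc x hx).ne'))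
      · exact (continuous_const.mul continuous_id).continuousOn
    have hEcont : ContinuousOn E I := by
      apply Real.continuous_exp.comp_continuousOn
      apply ContinuousOn.add
      · exact continuousOn_const.mul
          (((Real.continuous_cos.comp (continuous_const.mul continuous_id)).continuousOn).log
            (fun x hx => (hcosc x hx).ne'))
      · exact (continuous_const.mul (continuous_pow 2)).continuousOn
    have hFcont : ContinuousOn F I := (hψcont.sub (hHcont.mul hφcont)).mul hEcont
    have hFmono : StrictMonoOn F I := by
      apply strictMonoOn_of_deriv_pos (convex_Icc _ _) hFcont
      intro x hx0
      have hint : interior I = Ioo (-D) D := by rw [hIdef]; exact interior_Icc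
      have hx : x ∈ Ioo (-D) D := by rwa [hint] at hx0
      have hxI : x ∈ I := Ioo_subset_Icc_self hx
      have hG : HasDerivAt (fun y => ψ y - H y * φ y)
          ((K * φ x + K * x * ψ x - lam * φ x) -
            ((m - θ * b ^ 2 / (Real.cos (b * x)) ^ 2) * φ x + H x * ψ x)) x :=
        (hdψ x hx).sub ((hHd x hxI).mul (hdφ x hx))
      have hF' : HasDerivAt F
          (((K * φ x + K * x * ψ x - lam * φ x) -
            ((m - θ * b ^ 2 / (Real.cos (b * x)) ^ 2) * φ x + H x * ψ x)) * E x +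
            (ψ x - H x * φ x) * (E x * (H x - K * x))) x := hG.mul (hEd x hxI)
      have hval : (((K * φ x + K * x * ψ x - lam * φ x) -
            ((m - θ * b ^ 2 / (Real.cos (b * x)) ^ 2) * φ x + H x * ψ x)) * E x +
            (ψ x - H x * φ x) * (E x * (H x - K * x))) = E x * (φ x * Q x) := by
        simp only [hQdef]
        ring
      rw [hF'.deriv, hval]
      exact mul_pos (Real.exp_pos _) (mul_pos (hmono x hx) (hQpos x hxI))
    have hlt2 : F (-D) < F D := hFmono hmD hDmem hDD
    have hFm : F (-D) = ψ (-D) * E (-D) := by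
      simp only [hFdef, hbc1]
      ring
    have hFD : F D = ψ D * E D := by
      simp only [hFdef, hbc2]
      ring
    have h1 : 0 ≤ F (-D) := by
      rw [hFm]
      exact mul_nonneg hψmD (Real.exp_pos _).le
    have h2 : F D ≤ 0 := by
      rw [hFD]
      exact mul_nonpos_of_nonpos_of_nonneg hψD (Real.exp_pos _).le
    linarith
  refine ⟨main, ?_⟩
  apply csSup_le
  · exact ⟨4 * (1/2) * (1 - 1/2) * π ^ 2 / d ^ 2 + (1/2) * K,
      ⟨1/2, ⟨by norm_num, by norm_num⟩, rfl⟩⟩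
  · rintro y ⟨s, hs, rfl⟩
    exact main s hs
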